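/- Let p_t(x,y) = 2 ∑_{n=1}^∞ exp(-(π²/2) n² t) sin(π n x) sin(π n y) for x, y ∈ [0,1] and t > 0 (the transition density of Brownian motion killed upon exiting (0,1)). Define E_t = π² ∑_{n=2}^∞ n² exp(-π²(n²-1)t/2). Then for all x, y ∈ [0,1] and t > 0: |exp(π² t/2) · p_t(x,y) − 2 sin(π x) sin(π y)| ≤ E_t · 2 sin(π x) sin(π y). -/

import Mathlib

open Real

lemma my_abs_sin_nat_mul (n : ℕ) (θ : ℝ) : |Real.sin ((n : ℝ) * θ)| ≤ (n : ℝ) * |Real.sin θ| := by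
  induction n with
  | zero => simp
  | succ n ih =>
    have h1 : ((n : ℝ) + 1) * θ = (n : ℝ) * θ + θ := by ring
    push_cast
    rw [h1, Real.sin_add]
    calc |Real.sin ((n:ℝ)*θ) * Real.cos θ + Real.cos ((n:ℝ)*θ) * Real.sin θ|
        ≤ |Real.sin ((n:ℝ)*θ) * Real.cos θ| + |Real.cos ((n:ℝ)*θ) * Real.sin θ| := abs_add_le _ _
      _ = |Real.sin ((n:ℝ)*θ)| * |Real.cos θ| + |Real.cos ((n:ℝ)*θ)| * |Real.sin θ| := by
          rw [abs_mul, abs_mul]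
      _ ≤ |Real.sin ((n:ℝ)*θ)| * 1 + 1 * |Real.sin θ| := by
          gcongr
          · exact Real.abs_cos_le_one θ
          · exact Real.abs_cos_le_one _
      _ ≤ (n:ℝ) * |Real.sin θ| + 1 * |Real.sin θ| := by
          rw [mul_one]; gcongr
      _ = ((n:ℝ) + 1) * |Real.sin θ| := by ring


/-- The transition density of Brownian motion killed upon exiting `(0,1)`:
`p_t(x,y) = 2 ∑_{n=1}^∞ exp(-(π²/2) n² t) sin(π n x) sin(π n y)`. -/
noncomputable def pKilled (t x y : ℝ) : ℝ :=
  2 * ∑' n : ℕ, Real.exp (-(π ^ 2 / 2) * ((n : ℝ) + 1) ^ 2 * t) *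
    Real.sin (π * ((n : ℝ) + 1) * x) * Real.sin (π * ((n : ℝ) + 1) * y)

/-- The error term `E_t = π² ∑_{n=2}^∞ n² exp(-π² (n²-1) t / 2)`. -/
noncomputable def Eerr (t : ℝ) : ℝ :=
  π ^ 2 * ∑' n : ℕ, ((n : ℝ) + 2) ^ 2 * Real.exp (-π ^ 2 * (((n : ℝ) + 2) ^ 2 - 1) * t / 2)

set_option maxHeartbeats 1000000 in
/-- For all `x, y ∈ [0,1]` and `t > 0`:
`|exp(π² t/2) p_t(x,y) − 2 sin(πx) sin(πy)| ≤ E_t · 2 sin(πx) sin(πy)`. -/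
theorem abs_pKilled_sub_le (t : ℝ) (ht : 0 < t) (x y : ℝ)
    (hx : x ∈ Set.Icc (0 : ℝ) 1) (hy : y ∈ Set.Icc (0 : ℝ) 1) :
    |Real.exp (π ^ 2 * t / 2) * pKilled t x y - 2 * Real.sin (π * x) * Real.sin (π * y)| ≤
      Eerr t * (2 * Real.sin (π * x) * Real.sin (π * y)) := by
  obtain ⟨hx0, hx1⟩ := hx
  obtain ⟨hy0, hy1⟩ := hy
  have hπ : (0:ℝ) < π := Real.pi_pos
  have hsx : 0 ≤ Real.sin (π * x) :=
    Real.sin_nonneg_of_nonneg_of_le_pi (by positivity) (by nlinarith)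
  have hsy : 0 ≤ Real.sin (π * y) :=
    Real.sin_nonneg_of_nonneg_of_le_pi (by positivity) (by nlinarith)
  set r : ℝ := Real.exp (-(π ^ 2 / 2) * t) with hr_def
  have hr0 : 0 < r := Real.exp_pos _
  have hr1 : r < 1 := by
    rw [hr_def, Real.exp_lt_one_iff]
    nlinarith [mul_pos (pow_pos hπ 2) ht]
  -- the rescaled terms
  set h : ℕ → ℝ := fun n => Real.exp (-(π ^ 2 / 2) * (((n:ℝ)+1)^2 - 1) * t) *
      Real.sin (π * ((n:ℝ)+1) * x) * Real.sin (π * ((n:ℝ)+1) * y) with hh_def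
  have habs : ∀ n : ℕ, |h n| ≤ r ^ n := by
    intro n
    have e1 : Real.exp (-(π ^ 2 / 2) * (((n:ℝ)+1)^2 - 1) * t) ≤ r ^ n := by
      rw [hr_def, ← Real.exp_nat_mul]
      apply Real.exp_le_exp.2
      nlinarith [mul_nonneg (mul_nonneg (sq_nonneg π) ht.le)
        (by positivity : (0:ℝ) ≤ (n:ℝ)^2 + (n:ℝ))]
    have e0 : (0:ℝ) < Real.exp (-(π ^ 2 / 2) * (((n:ℝ)+1)^2 - 1) * t) := Real.exp_pos _
    calc |h n| = Real.exp (-(π ^ 2 / 2) * (((n:ℝ)+1)^2 - 1) * t) *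
          |Real.sin (π * ((n:ℝ)+1) * x)| * |Real.sin (π * ((n:ℝ)+1) * y)| := by
            rw [hh_def]; simp only [abs_mul, Real.abs_exp]
      _ ≤ Real.exp (-(π ^ 2 / 2) * (((n:ℝ)+1)^2 - 1) * t) * 1 * 1 := by
            gcongr
            · exact Real.abs_sin_le_one _
            · exact Real.abs_sin_le_one _
      _ = Real.exp (-(π ^ 2 / 2) * (((n:ℝ)+1)^2 - 1) * t) := by ring
      _ ≤ r ^ n := e1
  have hsum_h : Summable h :=
    Summable.of_norm_bounded (summable_geometric_of_lt_one hr0.le hr1) habs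
  -- summability of pKilled's series
  have hsum_g : Summable (fun n : ℕ => Real.exp (-(π ^ 2 / 2) * ((n : ℝ) + 1) ^ 2 * t) *
      Real.sin (π * ((n : ℝ) + 1) * x) * Real.sin (π * ((n : ℝ) + 1) * y)) := by
    apply Summable.of_norm_bounded (summable_geometric_of_lt_one hr0.le hr1)
    intro n
    have e1 : Real.exp (-(π ^ 2 / 2) * (((n:ℝ)+1)^2) * t) ≤ r ^ n := by
      rw [hr_def, ← Real.exp_nat_mul]
      apply Real.exp_le_exp.2
      nlinarith [mul_nonneg (mul_nonneg (sq_nonneg π) ht.le)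
        (by positivity : (0:ℝ) ≤ (n:ℝ)^2 + (n:ℝ) + 1)]
    calc ‖Real.exp (-(π ^ 2 / 2) * ((n : ℝ) + 1) ^ 2 * t) *
          Real.sin (π * ((n : ℝ) + 1) * x) * Real.sin (π * ((n : ℝ) + 1) * y)‖
        = Real.exp (-(π ^ 2 / 2) * ((n : ℝ) + 1) ^ 2 * t) *
          |Real.sin (π * ((n:ℝ)+1) * x)| * |Real.sin (π * ((n:ℝ)+1) * y)| := by
            simp only [Real.norm_eq_abs, abs_mul, Real.abs_exp]
      _ ≤ Real.exp (-(π ^ 2 / 2) * ((n:ℝ)+1)^2 * t) * 1 * 1 := by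
            gcongr
            · exact Real.abs_sin_le_one _
            · exact Real.abs_sin_le_one _
      _ = Real.exp (-(π ^ 2 / 2) * (((n:ℝ)+1)^2) * t) := by ring
      _ ≤ r ^ n := e1
  -- rewrite exp * pKilled as 2 * tsum h
  have key : Real.exp (π ^ 2 * t / 2) * pKilled t x y = 2 * ∑' n, h n := by
    rw [pKilled]
    rw [show Real.exp (π ^ 2 * t / 2) * (2 * ∑' n : ℕ,
        Real.exp (-(π ^ 2 / 2) * ((n : ℝ) + 1) ^ 2 * t) *
        Real.sin (π * ((n : ℝ) + 1) * x) * Real.sin (π * ((n : ℝ) + 1) * y)) =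
        2 * (Real.exp (π ^ 2 * t / 2) * ∑' n : ℕ,
        Real.exp (-(π ^ 2 / 2) * ((n : ℝ) + 1) ^ 2 * t) *
        Real.sin (π * ((n : ℝ) + 1) * x) * Real.sin (π * ((n : ℝ) + 1) * y)) by ring]
    rw [← tsum_mul_left]
    congr 1
    apply tsum_congr
    intro n
    rw [hh_def]
    simp only
    rw [← mul_assoc, ← mul_assoc, ← Real.exp_add]
    congr 2
    ring
  -- value of h 0
  have h0 : h 0 = Real.sin (π * x) * Real.sin (π * y) := by
    rw [hh_def]; norm_num
  have hsplit : ∑' n, h n = h 0 + ∑' n, h (n + 1) := Summable.tsum_eq_zero_add hsum_h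
  have hsum_h1 : Summable (fun n : ℕ => h (n + 1)) := (summable_nat_add_iff 1).2 hsum_h
  -- bound each tail term
  set S : ℕ → ℝ := fun n => ((n : ℝ) + 2) ^ 2 *
      Real.exp (-π ^ 2 * (((n : ℝ) + 2) ^ 2 - 1) * t / 2) with hS_def
  have hterm : ∀ n : ℕ, |h (n + 1)| ≤ S n * (Real.sin (π * x) * Real.sin (π * y)) := by
    intro n
    have hexp_eq : (-(π ^ 2 / 2) * (((n:ℝ)+1+1)^2 - 1) * t) =
        (-π ^ 2 * (((n : ℝ) + 2) ^ 2 - 1) * t / 2) := by ring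
    have hxs : |Real.sin (π * ((n:ℝ)+1+1) * x)| ≤ ((n:ℝ)+2) * Real.sin (π * x) := by
      have := my_abs_sin_nat_mul (n + 2) (π * x)
      push_cast at this
      rw [abs_of_nonneg hsx] at this
      calc |Real.sin (π * ((n:ℝ)+1+1) * x)| = |Real.sin (((n:ℝ)+2) * (π * x))| := by
            ring_nf
        _ ≤ ((n:ℝ)+2) * Real.sin (π * x) := this
    have hys : |Real.sin (π * ((n:ℝ)+1+1) * y)| ≤ ((n:ℝ)+2) * Real.sin (π * y) := by
      have := my_abs_sin_nat_mul (n + 2) (π * y)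
      push_cast at this
      rw [abs_of_nonneg hsy] at this
      calc |Real.sin (π * ((n:ℝ)+1+1) * y)| = |Real.sin (((n:ℝ)+2) * (π * y))| := by
            ring_nf
        _ ≤ ((n:ℝ)+2) * Real.sin (π * y) := this
    have hxpos : (0:ℝ) ≤ ((n:ℝ)+2) * Real.sin (π * x) := by positivity
    calc |h (n+1)| = Real.exp (-(π ^ 2 / 2) * (((n:ℝ)+1+1)^2 - 1) * t) *
          |Real.sin (π * ((n:ℝ)+1+1) * x)| * |Real.sin (π * ((n:ℝ)+1+1) * y)| := by
            rw [hh_def]; push_cast; simp only [abs_mul, Real.abs_exp]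
      _ ≤ Real.exp (-(π ^ 2 / 2) * (((n:ℝ)+1+1)^2 - 1) * t) *
          (((n:ℝ)+2) * Real.sin (π * x)) * (((n:ℝ)+2) * Real.sin (π * y)) := by
            gcongr
      _ = S n * (Real.sin (π * x) * Real.sin (π * y)) := by
            rw [hS_def]; simp only; rw [hexp_eq]; ring
  -- summability of S
  have hsum_S : Summable S := by
    have hbase : Summable (fun n : ℕ => ((n:ℝ))^2 * r ^ n) := by
      have : ‖r‖ < 1 := by rwa [Real.norm_eq_abs, abs_of_pos hr0]
      simpa using summable_pow_mul_geometric_of_norm_lt_one 2 this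
    have hshift : Summable (fun n : ℕ => ((n:ℝ)+2)^2 * r ^ (n + 2)) := by
      have := (summable_nat_add_iff 2).2 hbase
      apply this.congr
      intro n; push_cast; ring
    have hshift2 : Summable (fun n : ℕ => ((n:ℝ)+2)^2 * r ^ n) := by
      have := hshift.mul_left (r ^ 2)⁻¹
      apply this.congr
      intro n
      field_simp
      ring
    apply Summable.of_nonneg_of_le (fun n => by positivity) _ hshift2
    intro n
    rw [hS_def]
    simp only
    gcongr ((n:ℝ)+2)^2 * ?_
    rw [hr_def, ← Real.exp_nat_mul]
    apply Real.exp_le_exp.2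
    nlinarith [mul_nonneg (mul_nonneg (sq_nonneg π) ht.le)
      (by positivity : (0:ℝ) ≤ (n:ℝ)^2 + 3*(n:ℝ) + 3)]
  have hsum_S' : Summable (fun n => S n * (Real.sin (π * x) * Real.sin (π * y))) :=
    hsum_S.mul_right _
  -- main estimate
  rw [key, hsplit, h0]
  have heq : 2 * (Real.sin (π * x) * Real.sin (π * y) + ∑' n, h (n + 1)) -
      2 * Real.sin (π * x) * Real.sin (π * y) = 2 * ∑' n, h (n + 1) := by ring
  rw [heq, abs_mul]
  have habs2 : |(2:ℝ)| = 2 := by norm_num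
  rw [habs2]
  have hT : |∑' n, h (n + 1)| ≤ (∑' n, S n) * (Real.sin (π * x) * Real.sin (π * y)) := by
    calc |∑' n, h (n + 1)| ≤ ∑' n, |h (n + 1)| := by
          have hn : Summable (fun n => ‖h (n + 1)‖) := by
            simpa [Real.norm_eq_abs] using hsum_h1.abs
          simpa [Real.norm_eq_abs] using norm_tsum_le_tsum_norm hn
      _ ≤ ∑' n, S n * (Real.sin (π * x) * Real.sin (π * y)) :=
          Summable.tsum_le_tsum hterm hsum_h1.abs hsum_S'
      _ = (∑' n, S n) * (Real.sin (π * x) * Real.sin (π * y)) := tsum_mul_right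
  have hSnn : 0 ≤ ∑' n, S n := tsum_nonneg (fun n => by positivity)
  have hπ2 : (1:ℝ) ≤ π ^ 2 := by nlinarith [Real.pi_gt_three]
  calc 2 * |∑' n, h (n + 1)| ≤ 2 * ((∑' n, S n) * (Real.sin (π * x) * Real.sin (π * y))) := by
        gcongr
    _ ≤ π ^ 2 * (∑' n, S n) * (2 * Real.sin (π * x) * Real.sin (π * y)) := by
        nlinarith [mul_nonneg hsx hsy, mul_nonneg hSnn (mul_nonneg hsx hsy)]
    _ = Eerr t * (2 * Real.sin (π * x) * Real.sin (π * y)) := by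
        rw [Eerr, hS_def]
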